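/- Let a, b, c, d, p, q, r, s, w be integers satisfying a·p + b·q = 1 + a·b and c·r + d·s = 1 + c·d, and set u = a·c + b·d and v = a·d − b·c. If v·w ≡ 1 (mod u), then (c² + d²)·(a·s + b·(d − r))·w ≡ 1 (mod u); that is, (a·s + b·(d − r))·w represents the modular inverse of c² + d² modulo u. -/
import Mathlib

theorem inverse_of_sum_of_squares_cd_mod_u
    (a b c d p q r s w : ℤ)
    (hab : a * p + b * q = 1 + a * b)
    (hcd : c * r + d * s = 1 + c * d)
    (hw : (a * d - b * c) * w ≡ 1 [ZMOD a * c + b * d]) :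
    (c ^ 2 + d ^ 2) * ((a * s + b * (d - r)) * w) ≡ 1 [ZMOD a * c + b * d] := by
  have key : (c ^ 2 + d ^ 2) * ((a * s + b * (d - r)) * w) ≡ (a * d - b * c) * w [ZMOD a * c + b * d] := by
    have h : (c ^ 2 + d ^ 2) * ((a * s + b * (d - r)) * w) - (a * d - b * c) * w
        = (a * c + b * d) * ((c * s - d * r + d ^ 2) * w) := by
      linear_combination (a * d - b * c) * w * hcd
    exact Int.ModEq.symm (Int.modEq_iff_dvd.mpr ⟨(c * s - d * r + d ^ 2) * w, h⟩)
  exact key.trans hw
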